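/- For every n ∈ ℕ and every partition α of n, the rational number (∏_{μ<α} b_μ)/(∏_{μ<α} a_μ) is a (positive) integer, where the products run over partitions μ of n lexicographically smaller than α, a_μ = ∏_i i^{m_i(μ)} and b_μ = ∏_i m_i(μ)!. -/

import Mathlib

open scoped Classical

namespace PartArith

/-- `a_μ = ∏ i^{m_i(μ)}`, the product of the parts of `μ`. -/
def aNum {n : ℕ} (μ : Nat.Partition n) : ℕ := μ.parts.prod

/-- `b_μ = ∏ m_i(μ)!`, the product of the factorials of the multiplicities of the parts. -/
def bNum {n : ℕ} (μ : Nat.Partition n) : ℕ :=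
  ∏ i ∈ μ.parts.toFinset, (μ.parts.count i).factorial

/-- `t_S(n)`, the number of divisors of `n` lying in `S`. -/
noncomputable def tS (S : Set ℕ) (n : ℕ) : ℕ := (n.divisors.filter (· ∈ S)).card

/-- `e_{S,p}(n) = ∑_{d ∣ n, d ∈ S} ν_p(d)`. -/
noncomputable def eS (S : Set ℕ) (p n : ℕ) : ℕ :=
  ∑ d ∈ n.divisors.filter (· ∈ S), d.factorization p

/-- `f_{S,p}(n) = |{(r, j) : r ∈ S, j ≥ 1, r·p^j ∣ n}|` (for `n ≥ 1` this set is finite and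
contained in `divisors n × [1, n]`). -/
noncomputable def fS (S : Set ℕ) (p n : ℕ) : ℕ :=
  ((n.divisors ×ˢ Finset.Icc 1 n).filter fun rj => rj.1 ∈ S ∧ rj.1 * p ^ rj.2 ∣ n).card

/-- `S` is `p`-divisible: `p·r ∈ S` (for `r ≥ 1`) implies `r ∈ S`. -/
def PDivisible (S : Set ℕ) (p : ℕ) : Prop := ∀ r : ℕ, 1 ≤ r → p * r ∈ S → r ∈ S

/-- `S` is `p`-closed: `d ∈ S` implies `p·d ∈ S`. -/
def PClosed (S : Set ℕ) (p : ℕ) : Prop := ∀ d ∈ S, p * d ∈ S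

/-- The number of partitions of `n` with all parts in `S`. -/
noncomputable def pCount (S : Set ℕ) (n : ℕ) : ℕ :=
  Fintype.card {μ : Nat.Partition n // ∀ i ∈ μ.parts, i ∈ S}

/-- `a_{P(n,S)} = ∏_{μ ∈ P(n,S)} a_μ`. -/
noncomputable def aProd (S : Set ℕ) (n : ℕ) : ℕ :=
  ∏ μ : {μ : Nat.Partition n // ∀ i ∈ μ.parts, i ∈ S}, aNum μ.1

/-- `b_{P(n,S)} = ∏_{μ ∈ P(n,S)} b_μ`. -/
noncomputable def bProd (S : Set ℕ) (n : ℕ) : ℕ :=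
  ∏ μ : {μ : Nat.Partition n // ∀ i ∈ μ.parts, i ∈ S}, bNum μ.1


/-- The parts of a partition, listed in weakly decreasing order. -/
def descList {n : ℕ} (μ : Nat.Partition n) : List ℕ := (μ.parts.sort (· ≤ ·)).reverse

/-- Strict lexicographic order on partitions of `n`. -/
def plex {n : ℕ} (μ ν : Nat.Partition n) : Prop :=
  List.Lex (· < ·) (descList μ) (descList ν)

/-- **Corollary 3.8.** For every `n ∈ ℕ` and every partition `α` of `n`, the quotient
`(∏_{μ < α} b_μ)/(∏_{μ < α} a_μ)` is a (positive) integer; that is, `∏_{μ < α} a_μ` divides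
`∏_{μ < α} b_μ`, the products running over the partitions `μ` of `n` that are lexicographically
smaller than `α`. -/
lemma lex_of_sorted_count : ∀ (l₁ : List ℕ) {l₂ : List ℕ}, l₁.Pairwise (· ≥ ·) → l₂.Pairwise (· ≥ ·) →
    ∀ b : ℕ, l₂.count b < l₁.count b → (∀ c, b < c → l₁.count c = l₂.count c) →
    List.Lex (· < ·) l₂ l₁
  | [], l₂, _, _, b, hlt, _ => by simp at hlt
  | a :: l₁, l₂, h₁, h₂, b, hlt, heq => by
    have hmax₁ : ∀ x ∈ a :: l₁, x ≤ a := by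
      intro x hx
      rcases List.mem_cons.1 hx with h | h
      · exact h.le
      · exact (List.pairwise_cons.1 h₁).1 x h
    have hbmem : b ∈ a :: l₁ := by
      rw [← List.count_pos_iff]; omega
    have hba : b ≤ a := hmax₁ b hbmem
    cases l₂ with
    | nil => exact List.Lex.nil
    | cons a' l₂' =>
      have hmax₂ : ∀ x ∈ a' :: l₂', x ≤ a' := by
        intro x hx
        rcases List.mem_cons.1 hx with h | h
        · exact h.le
        · exact (List.pairwise_cons.1 h₂).1 x h
      have ha'a : a' ≤ a := by
        by_contra hc
        push_neg at hc
        have hb : b < a' := lt_of_le_of_lt hba hc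
        have : a' ∈ a :: l₁ := by
          rw [← List.count_pos_iff, heq a' hb, List.count_pos_iff]
          exact List.mem_cons_self
        exact absurd (hmax₁ a' this) (not_le.2 hc)
      rcases lt_or_eq_of_le ha'a with h | h
      · exact List.Lex.rel h
      · subst h
        apply List.Lex.cons
        refine lex_of_sorted_count l₁ (List.Pairwise.of_cons h₁) (List.Pairwise.of_cons h₂) b ?_ ?_
        · have e1 := List.count_cons (a := b) (b := a') (l := l₁)
          have e2 := List.count_cons (a := b) (b := a') (l := l₂')
          omega
        · intro c hc
          have := heq c hc
          have e1 := List.count_cons (a := c) (b := a') (l := l₁)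
          have e2 := List.count_cons (a := c) (b := a') (l := l₂')
          omega

lemma count_descList {n : ℕ} (μ : Nat.Partition n) (b : ℕ) :
    (descList μ).count b = μ.parts.count b := by
  rw [descList, List.count_reverse, ← Multiset.coe_count, Multiset.sort_eq]

lemma sorted_descList {n : ℕ} (μ : Nat.Partition n) : (descList μ).Pairwise (· ≥ ·) := by
  rw [descList, List.pairwise_reverse]
  exact μ.parts.pairwise_sort (· ≤ ·)

lemma plex_of_count {n : ℕ} (μ ν : Nat.Partition n) (b : ℕ)
    (h1 : ν.parts.count b < μ.parts.count b)
    (h2 : ∀ c, b < c → μ.parts.count c = ν.parts.count c) : plex ν μ := by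
  apply lex_of_sorted_count (descList μ) (sorted_descList μ) (sorted_descList ν) b
  · rw [count_descList, count_descList]; exact h1
  · intro c hc; rw [count_descList, count_descList]; exact h2 c hc

lemma lex_lt_trans : ∀ {l₁ l₂ l₃ : List ℕ}, List.Lex (· < ·) l₁ l₂ →
    List.Lex (· < ·) l₂ l₃ → List.Lex (· < ·) l₁ l₃
  | _, _, _, List.Lex.nil, List.Lex.cons _ => List.Lex.nil
  | _, _, _, List.Lex.nil, List.Lex.rel _ => List.Lex.nil
  | _, _, _, List.Lex.cons h₁, List.Lex.cons h₂ => List.Lex.cons (lex_lt_trans h₁ h₂)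
  | _, _, _, List.Lex.cons _, List.Lex.rel h₂ => List.Lex.rel h₂
  | _, _, _, List.Lex.rel h₁, List.Lex.cons _ => List.Lex.rel h₁
  | _, _, _, List.Lex.rel h₁, List.Lex.rel h₂ => List.Lex.rel (lt_trans h₁ h₂)

lemma plex_trans {n : ℕ} {μ ν ρ : Nat.Partition n} (h1 : plex μ ν) (h2 : plex ν ρ) : plex μ ρ :=
  lex_lt_trans h1 h2


noncomputable def splitP (q i' t : ℕ) {n : ℕ} (μ : Nat.Partition n) : Nat.Partition n :=
  if h : 1 ≤ i' ∧ 1 ≤ t ∧ 2 ≤ q ∧ t ≤ μ.parts.count (q * i') then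
    { parts := μ.parts - Multiset.replicate t (q * i') + Multiset.replicate (t * q) i'
      parts_pos := by
        intro x hx
        rcases Multiset.mem_add.1 hx with h' | h'
        · exact μ.parts_pos (Multiset.mem_of_le tsub_le_self h')
        · rw [Multiset.eq_of_mem_replicate h']; exact h.1
      parts_sum := by
        have hle : Multiset.replicate t (q * i') ≤ μ.parts :=
          Multiset.le_count_iff_replicate_le.1 h.2.2.2
        have hs : (μ.parts - Multiset.replicate t (q * i')).sum + t * (q * i') = n := by
          have := congrArg Multiset.sum (tsub_add_cancel_of_le hle)
          rwa [Multiset.sum_add, Multiset.sum_replicate, smul_eq_mul, μ.parts_sum] at this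
        rw [Multiset.sum_add, Multiset.sum_replicate, smul_eq_mul]
        rw [← mul_assoc] at hs
        omega }
  else μ

lemma count_splitP {q i' t n : ℕ} {μ : Nat.Partition n}
    (h : 1 ≤ i' ∧ 1 ≤ t ∧ 2 ≤ q ∧ t ≤ μ.parts.count (q * i')) (c : ℕ) :
    (splitP q i' t μ).parts.count c =
      μ.parts.count c - (if c = q * i' then t else 0) + (if c = i' then t * q else 0) := by
  rw [splitP, dif_pos h]
  simp only [Multiset.count_add, Multiset.count_sub, Multiset.count_replicate]
  congr 1
  · congr 1
    simp only [eq_comm]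
  · simp only [eq_comm]

lemma plex_splitP {q i' t n : ℕ} {μ : Nat.Partition n}
    (h : 1 ≤ i' ∧ 1 ≤ t ∧ 2 ≤ q ∧ t ≤ μ.parts.count (q * i')) :
    plex (splitP q i' t μ) μ := by
  have hne : i' ≠ q * i' := by nlinarith [h.1, h.2.2.1]
  apply plex_of_count μ _ (q * i')
  · rw [count_splitP h, if_pos rfl, if_neg (Ne.symm hne)]
    omega
  · intro c hc
    have h1 : c ≠ q * i' := by omega
    have h2 : c ≠ i' := by nlinarith [h.1, h.2.2.1]
    rw [count_splitP h, if_neg h1, if_neg h2]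
    omega

lemma card_le_split (n : ℕ) (α : Nat.Partition n) (q i' t : ℕ)
    (hq : 2 ≤ q) (hi' : 1 ≤ i') (ht : 1 ≤ t) :
    (Finset.univ.filter
        (fun μ : {μ : Nat.Partition n // plex μ α} => t ≤ μ.1.parts.count (q * i'))).card ≤
    (Finset.univ.filter
        (fun μ : {μ : Nat.Partition n // plex μ α} => t * q ≤ μ.1.parts.count i')).card := by
  have key : ∀ μ : {μ : Nat.Partition n // plex μ α}, t ≤ μ.1.parts.count (q * i') →
      (1 ≤ i' ∧ 1 ≤ t ∧ 2 ≤ q ∧ t ≤ μ.1.parts.count (q * i')) :=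
    fun μ h => ⟨hi', ht, hq, h⟩
  apply Finset.card_le_card_of_injOn
    (fun μ => if h : t ≤ μ.1.parts.count (q * i') then
        ⟨splitP q i' t μ.1, plex_trans (plex_splitP (key μ h)) μ.2⟩ else μ)
  · intro μ hμ
    simp only [Finset.mem_coe, Finset.mem_filter, Finset.mem_univ, true_and] at hμ ⊢
    rw [dif_pos hμ]
    have hne : i' ≠ q * i' := by nlinarith
    rw [count_splitP (key μ hμ), if_neg hne, if_pos rfl]
    omega
  · intro μ₁ h₁ μ₂ h₂ heq
    simp only [Finset.mem_coe, Finset.mem_filter, Finset.mem_univ, true_and] at h₁ h₂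
    simp only [dif_pos h₁, dif_pos h₂, Subtype.mk.injEq] at heq
    have hne : i' ≠ q * i' := by nlinarith
    have hcnt : ∀ c, μ₁.1.parts.count c = μ₂.1.parts.count c := by
      intro c
      have e1 := count_splitP (key μ₁ h₁) c
      have e2 := count_splitP (key μ₂ h₂) c
      rw [heq, e2] at e1
      by_cases hc1 : c = q * i'
      · subst hc1
        rw [if_pos rfl, if_neg (Ne.symm hne)] at e1
        omega
      · by_cases hc2 : c = i'
        · subst hc2
          rw [if_neg hne, if_pos rfl] at e1
          omega
        · rw [if_neg hc1, if_neg hc2] at e1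
          omega
    have : μ₁.1.parts = μ₂.1.parts := Multiset.ext.2 hcnt
    exact Subtype.ext (Nat.Partition.ext this)

lemma count_parts_le {n : ℕ} (μ : Nat.Partition n) (c : ℕ) : μ.parts.count c ≤ n := by
  refine (Multiset.count_le_card c _).trans ?_
  have h := Multiset.card_nsmul_le_sum (s := μ.parts) (a := 1) (fun x hx => μ.parts_pos hx)
  rwa [smul_eq_mul, mul_one, μ.parts_sum] at h

lemma layer1 {m n : ℕ} (h : m ≤ n) :
    m = ∑ t ∈ Finset.Icc 1 n, if t ≤ m then 1 else 0 := by
  rw [Finset.sum_boole]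
  have : (Finset.Icc 1 n).filter (· ≤ m) = Finset.Icc 1 m := by
    ext x; simp only [Finset.mem_filter, Finset.mem_Icc]; omega
  rw [this, Nat.card_Icc]
  simp

lemma layer2 {m n q : ℕ} (hq : 1 ≤ q) (h : m ≤ n) :
    m / q = ∑ t ∈ Finset.Icc 1 n, if t * q ≤ m then 1 else 0 := by
  rw [Finset.sum_boole]
  have : (Finset.Icc 1 n).filter (fun t => t * q ≤ m) = Finset.Icc 1 (m / q) := by
    ext x
    simp only [Finset.mem_filter, Finset.mem_Icc]
    constructor
    · rintro ⟨⟨h1, _⟩, h3⟩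
      exact ⟨h1, (Nat.le_div_iff_mul_le hq).2 h3⟩
    · rintro ⟨h1, h2⟩
      have h3 := (Nat.le_div_iff_mul_le hq).1 h2
      have : x ≤ m := le_trans (Nat.le_mul_of_pos_right x hq) h3
      exact ⟨⟨h1, le_trans this h⟩, h3⟩
  rw [this, Nat.card_Icc]
  simp

-- per-i' inequality
lemma sum_count_le (n : ℕ) (α : Nat.Partition n) (q i' : ℕ) (hq : 2 ≤ q) (hi' : 1 ≤ i') :
    ∑ μ : {μ : Nat.Partition n // plex μ α}, μ.1.parts.count (q * i') ≤
    ∑ μ : {μ : Nat.Partition n // plex μ α}, μ.1.parts.count i' / q := by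
  calc ∑ μ : {μ : Nat.Partition n // plex μ α}, μ.1.parts.count (q * i')
      = ∑ μ : {μ : Nat.Partition n // plex μ α}, ∑ t ∈ Finset.Icc 1 n,
          if t ≤ μ.1.parts.count (q * i') then 1 else 0 := by
        refine Finset.sum_congr rfl fun μ _ => layer1 (count_parts_le μ.1 _)
    _ = ∑ t ∈ Finset.Icc 1 n, ∑ μ : {μ : Nat.Partition n // plex μ α},
          if t ≤ μ.1.parts.count (q * i') then 1 else 0 := Finset.sum_comm
    _ ≤ ∑ t ∈ Finset.Icc 1 n, ∑ μ : {μ : Nat.Partition n // plex μ α},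
          if t * q ≤ μ.1.parts.count i' then 1 else 0 := by
        refine Finset.sum_le_sum fun t ht => ?_
        rw [Finset.sum_boole, Finset.sum_boole]
        exact_mod_cast card_le_split n α q i' t hq hi' (Finset.mem_Icc.1 ht).1
    _ = ∑ μ : {μ : Nat.Partition n // plex μ α}, ∑ t ∈ Finset.Icc 1 n,
          if t * q ≤ μ.1.parts.count i' then 1 else 0 := Finset.sum_comm
    _ = ∑ μ : {μ : Nat.Partition n // plex μ α}, μ.1.parts.count i' / q := by
        refine Finset.sum_congr rfl fun μ _ =>
          (layer2 (by omega) (count_parts_le μ.1 _)).symm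

-- fixed q inequality
lemma sum_sum_count_le (n : ℕ) (α : Nat.Partition n) (q : ℕ) (hq : 2 ≤ q) :
    (∑ μ : {μ : Nat.Partition n // plex μ α}, ∑ i ∈ Finset.Icc 1 n,
        if q ∣ i then μ.1.parts.count i else 0) ≤
    ∑ μ : {μ : Nat.Partition n // plex μ α}, ∑ i ∈ Finset.Icc 1 n, μ.1.parts.count i / q := by
  have step : ∀ F : ℕ → ℕ, ∑ i ∈ (Finset.Icc 1 n).filter (q ∣ ·), F i ≤
      ∑ i' ∈ Finset.Icc 1 n, F (q * i') := by
    intro F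
    have himg : ((Finset.Icc 1 n).filter (q ∣ ·)).image (· / q) ⊆ Finset.Icc 1 n := by
      intro x hx
      simp only [Finset.mem_image, Finset.mem_filter, Finset.mem_Icc] at hx
      obtain ⟨i, ⟨⟨h1, h2⟩, hdvd⟩, rfl⟩ := hx
      have hqi : q ≤ i := Nat.le_of_dvd (by omega) hdvd
      rw [Finset.mem_Icc]
      constructor
      · exact Nat.one_le_div_iff (by omega) |>.2 hqi
      · exact le_trans (Nat.div_le_self i q) h2
    have hinj : ∀ x ∈ (Finset.Icc 1 n).filter (q ∣ ·),
        ∀ y ∈ (Finset.Icc 1 n).filter (q ∣ ·), x / q = y / q → x = y := by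
      intro x hx y hy hxy
      simp only [Finset.mem_filter] at hx hy
      have := Nat.div_mul_cancel hx.2
      have := Nat.div_mul_cancel hy.2
      nlinarith [hxy]
    calc ∑ i ∈ (Finset.Icc 1 n).filter (q ∣ ·), F i
        = ∑ i ∈ (Finset.Icc 1 n).filter (q ∣ ·), F (q * (i / q)) := by
          refine Finset.sum_congr rfl fun i hi => ?_
          rw [Nat.mul_div_cancel' (Finset.mem_filter.1 hi).2]
      _ = ∑ i' ∈ ((Finset.Icc 1 n).filter (q ∣ ·)).image (· / q), F (q * i') :=
          (Finset.sum_image (f := fun x => F (q * x)) (g := (· / q)) hinj).symm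
      _ ≤ ∑ i' ∈ Finset.Icc 1 n, F (q * i') := Finset.sum_le_sum_of_subset himg
  calc (∑ μ : {μ : Nat.Partition n // plex μ α}, ∑ i ∈ Finset.Icc 1 n,
        if q ∣ i then μ.1.parts.count i else 0)
      = ∑ i ∈ (Finset.Icc 1 n).filter (q ∣ ·),
          ∑ μ : {μ : Nat.Partition n // plex μ α}, μ.1.parts.count i := by
        rw [Finset.sum_comm, Finset.sum_filter]
        refine Finset.sum_congr rfl fun i _ => ?_
        split_ifs <;> simp
    _ ≤ ∑ i' ∈ Finset.Icc 1 n, ∑ μ : {μ : Nat.Partition n // plex μ α},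
          μ.1.parts.count (q * i') := step _
    _ ≤ ∑ i' ∈ Finset.Icc 1 n, ∑ μ : {μ : Nat.Partition n // plex μ α},
          μ.1.parts.count i' / q := by
        refine Finset.sum_le_sum fun i' hi' => sum_count_le n α q i' hq (Finset.mem_Icc.1 hi').1
    _ = ∑ μ : {μ : Nat.Partition n // plex μ α}, ∑ i ∈ Finset.Icc 1 n,
          μ.1.parts.count i / q := Finset.sum_comm

lemma parts_mem_Icc {n : ℕ} (μ : Nat.Partition n) {i : ℕ} (hi : i ∈ μ.parts) :
    i ∈ Finset.Icc 1 n := by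
  rw [Finset.mem_Icc]
  refine ⟨μ.parts_pos hi, ?_⟩
  have := Multiset.single_le_sum (fun x _ => Nat.zero_le x) i hi
  rwa [μ.parts_sum] at this

lemma aNum_pos {n : ℕ} (μ : Nat.Partition n) : 0 < aNum μ :=
  Multiset.prod_pos fun x hx => μ.parts_pos hx

lemma bNum_pos {n : ℕ} (μ : Nat.Partition n) : 0 < bNum μ :=
  Finset.prod_pos fun i _ => Nat.factorial_pos _

lemma factorization_multiset_prod (s : Multiset ℕ) (h : ∀ x ∈ s, x ≠ 0) :
    s.prod.factorization = (s.map Nat.factorization).sum := by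
  induction s using Multiset.induction with
  | empty => simp
  | cons a s ih =>
    have ha : a ≠ 0 := h a (Multiset.mem_cons_self a s)
    have hs : ∀ x ∈ s, x ≠ 0 := fun x hx => h x (Multiset.mem_cons_of_mem hx)
    have hsp : s.prod ≠ 0 := by
      rw [Ne, Multiset.prod_eq_zero_iff]
      intro h0; exact hs 0 h0 rfl
    rw [Multiset.prod_cons, Multiset.map_cons, Multiset.sum_cons,
      Nat.factorization_mul ha hsp, ih hs]

-- ν_p(i) as a count of powers dividing i
lemma factorization_eq_sum {p i n : ℕ} (hp : p.Prime) (h1 : 1 ≤ i) (h2 : i ≤ n) :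
    i.factorization p = ∑ j ∈ Finset.Icc 1 n, if p ^ j ∣ i then 1 else 0 := by
  rw [Finset.sum_boole]
  have hne : i ≠ 0 := by omega
  have hfle : i.factorization p ≤ n := le_trans (Nat.factorization_lt p hne).le h2
  have : (Finset.Icc 1 n).filter (fun j => p ^ j ∣ i) = Finset.Icc 1 (i.factorization p) := by
    ext j
    simp only [Finset.mem_filter, Finset.mem_Icc]
    constructor
    · rintro ⟨⟨hj1, _⟩, hdvd⟩
      exact ⟨hj1, (Nat.Prime.pow_dvd_iff_le_factorization hp hne).1 hdvd⟩
    · rintro ⟨hj1, hj2⟩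
      exact ⟨⟨hj1, le_trans hj2 hfle⟩, (Nat.Prime.pow_dvd_iff_le_factorization hp hne).2 hj2⟩
  rw [this, Nat.card_Icc]
  simp

-- a-side valuation
lemma factorization_aNum {n : ℕ} (μ : Nat.Partition n) (p : ℕ) :
    (aNum μ).factorization p = ∑ i ∈ Finset.Icc 1 n, μ.parts.count i * i.factorization p := by
  have happly : ((μ.parts.map Nat.factorization).sum) p
      = (μ.parts.map (fun i => i.factorization p)).sum := by
    refine Multiset.induction_on μ.parts (by simp) ?_
    intro a s ih
    simp [Finsupp.add_apply, ih]
  have e1 : (aNum μ).factorization p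
      = ∑ i ∈ μ.parts.toFinset, μ.parts.count i • i.factorization p := by
    rw [aNum]
    rw [show ((μ.parts.prod.factorization) p) = ((μ.parts.map Nat.factorization).sum) p from by
      rw [factorization_multiset_prod μ.parts (fun x hx => (μ.parts_pos hx).ne')]]
    rw [happly, Finset.sum_multiset_map_count]
  rw [e1, Finset.sum_subset (fun i hi => parts_mem_Icc μ (Multiset.mem_toFinset.1 hi))
      (fun i _ hnot => by
        rw [Multiset.count_eq_zero_of_notMem (fun h => hnot (Multiset.mem_toFinset.2 h))]
        simp)]
  simp [smul_eq_mul]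

-- b-side valuation lower bound
lemma factorization_bNum_ge {n : ℕ} (μ : Nat.Partition n) {p : ℕ} (hp : p.Prime) :
    (∑ i ∈ Finset.Icc 1 n, ∑ j ∈ Finset.Icc 1 n, μ.parts.count i / p ^ j) ≤
      (bNum μ).factorization p := by
  have key : ∀ m : ℕ, m ≤ n →
      (∑ j ∈ Finset.Icc 1 n, m / p ^ j) ≤ (m.factorial).factorization p := by
    intro m hm
    have hlog : Nat.log p m < n + 1 := lt_of_le_of_lt (le_trans (Nat.log_le_self p m) hm) (by omega)
    have hdvd : p ^ (∑ j ∈ Finset.Ico 1 (n + 1), m / p ^ j) ∣ m.factorial :=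
      (Nat.Prime.pow_dvd_factorial_iff hp hlog).2 le_rfl
    have := (Nat.Prime.pow_dvd_iff_le_factorization hp (Nat.factorial_ne_zero m)).1 hdvd
    rwa [Finset.Ico_add_one_right_eq_Icc] at this
  calc ∑ i ∈ Finset.Icc 1 n, ∑ j ∈ Finset.Icc 1 n, μ.parts.count i / p ^ j
      = ∑ i ∈ μ.parts.toFinset, ∑ j ∈ Finset.Icc 1 n, μ.parts.count i / p ^ j := by
        refine (Finset.sum_subset (fun i hi => parts_mem_Icc μ (Multiset.mem_toFinset.1 hi)) ?_).symm
        intro i _ hnot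
        rw [Multiset.count_eq_zero_of_notMem (fun h => hnot (Multiset.mem_toFinset.2 h))]
        simp
    _ ≤ ∑ i ∈ μ.parts.toFinset, ((μ.parts.count i).factorial).factorization p :=
        Finset.sum_le_sum fun i _ => key _ (count_parts_le μ i)
    _ = (bNum μ).factorization p := by
        rw [bNum, Nat.factorization_prod (fun i _ => Nat.factorial_ne_zero _), Finset.sum_apply']

theorem aProd_dvd_bProd_lex (n : ℕ) (α : Nat.Partition n) :
    (∏ μ : {μ : Nat.Partition n // plex μ α}, aNum μ.1) ∣
      ∏ μ : {μ : Nat.Partition n // plex μ α}, bNum μ.1 := by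
  classical
  have hA : (∏ μ : {μ : Nat.Partition n // plex μ α}, aNum μ.1) ≠ 0 :=
    (Finset.prod_pos fun μ _ => aNum_pos μ.1).ne'
  have hB : (∏ μ : {μ : Nat.Partition n // plex μ α}, bNum μ.1) ≠ 0 :=
    (Finset.prod_pos fun μ _ => bNum_pos μ.1).ne'
  rw [← Nat.factorization_le_iff_dvd hA hB, Finsupp.le_def]
  intro p
  by_cases hp : p.Prime
  swap
  · simp [Nat.factorization_eq_zero_of_not_prime _ hp]
  rw [Nat.factorization_prod (fun μ _ => (aNum_pos μ.1).ne'),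
    Nat.factorization_prod (fun μ _ => (bNum_pos μ.1).ne'),
    Finset.sum_apply', Finset.sum_apply']
  calc ∑ μ : {μ : Nat.Partition n // plex μ α}, (aNum μ.1).factorization p
      = ∑ μ : {μ : Nat.Partition n // plex μ α}, ∑ i ∈ Finset.Icc 1 n,
          μ.1.parts.count i * i.factorization p :=
        Finset.sum_congr rfl fun μ _ => factorization_aNum μ.1 p
    _ = ∑ μ : {μ : Nat.Partition n // plex μ α}, ∑ i ∈ Finset.Icc 1 n,
          ∑ j ∈ Finset.Icc 1 n, if p ^ j ∣ i then μ.1.parts.count i else 0 := by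
        refine Finset.sum_congr rfl fun μ _ => Finset.sum_congr rfl fun i hi => ?_
        rw [Finset.mem_Icc] at hi
        rw [factorization_eq_sum hp hi.1 hi.2, Finset.mul_sum]
        exact Finset.sum_congr rfl fun j _ => by rw [mul_ite, mul_one, mul_zero]
    _ = ∑ j ∈ Finset.Icc 1 n, ∑ μ : {μ : Nat.Partition n // plex μ α},
          ∑ i ∈ Finset.Icc 1 n, if p ^ j ∣ i then μ.1.parts.count i else 0 := by
        rw [show (∑ μ : {μ : Nat.Partition n // plex μ α}, ∑ i ∈ Finset.Icc 1 n,
            ∑ j ∈ Finset.Icc 1 n, if p ^ j ∣ i then μ.1.parts.count i else 0)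
            = ∑ μ : {μ : Nat.Partition n // plex μ α}, ∑ j ∈ Finset.Icc 1 n,
            ∑ i ∈ Finset.Icc 1 n, if p ^ j ∣ i then μ.1.parts.count i else 0 from
          Finset.sum_congr rfl fun μ _ => Finset.sum_comm]
        exact Finset.sum_comm
    _ ≤ ∑ j ∈ Finset.Icc 1 n, ∑ μ : {μ : Nat.Partition n // plex μ α},
          ∑ i ∈ Finset.Icc 1 n, μ.1.parts.count i / p ^ j := by
        refine Finset.sum_le_sum fun j hj => ?_
        rw [Finset.mem_Icc] at hj
        have hq : 2 ≤ p ^ j :=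
          le_trans hp.two_le (Nat.le_self_pow (by omega) p)
        exact sum_sum_count_le n α (p ^ j) hq
    _ = ∑ μ : {μ : Nat.Partition n // plex μ α}, ∑ i ∈ Finset.Icc 1 n,
          ∑ j ∈ Finset.Icc 1 n, μ.1.parts.count i / p ^ j := by
        rw [Finset.sum_comm]
        exact Finset.sum_congr rfl fun μ _ => Finset.sum_comm
    _ ≤ ∑ μ : {μ : Nat.Partition n // plex μ α}, (bNum μ.1).factorization p :=
        Finset.sum_le_sum fun μ _ => factorization_bNum_ge μ.1 hp

end PartArith
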